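/- A finite simple graph G satisfies D(G, x) = x^n (x + 2)^n if and only if G is isomorphic to H ∘ K₁ for some graph H of order n. -/

import Mathlib

open Polynomial

variable {V W : Type*}

/-- `S` is a dominating set of `G`. -/
def Dominates (G : SimpleGraph V) (S : Finset V) : Prop :=
  ∀ v, v ∉ S → ∃ u ∈ S, G.Adj u v

open Classical in
/-- The domination polynomial of a finite simple graph. -/
noncomputable def domPoly [Fintype V] (G : SimpleGraph V) : Polynomial ℤ :=
  ∑ S : Finset V, if Dominates G S then (X : Polynomial ℤ) ^ S.card else 0

/-- The corona `G ∘ H`. -/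
def corona (G : SimpleGraph V) (H : SimpleGraph W) : SimpleGraph (V ⊕ V × W) where
  Adj x y :=
    match x, y with
    | Sum.inl a, Sum.inl b => G.Adj a b
    | Sum.inl a, Sum.inr (b, _) => a = b
    | Sum.inr (b, _), Sum.inl a => a = b
    | Sum.inr (a, w), Sum.inr (b, w') => a = b ∧ H.Adj w w'
  symm := by
    constructor
    rintro (a | ⟨a, w⟩) (b | ⟨b, w'⟩) h
    · exact G.adj_symm h
    · exact h
    · exact h
    · exact ⟨h.1.symm, H.adj_symm h.2⟩
  loopless := by
    constructor
    rintro (a | ⟨a, w⟩) h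
    · exact G.irrefl h
    · exact H.irrefl h.2

section Basic
variable {G : SimpleGraph V}

lemma Dominates.mono {S T : Finset V} (h : Dominates G S) (hST : S ⊆ T) : Dominates G T := by
  intro v hv
  obtain ⟨u, hu, hadj⟩ := h v (fun hvS => hv (hST hvS))
  exact ⟨u, hST hu, hadj⟩

lemma dominates_univ [Fintype V] : Dominates G (Finset.univ : Finset V) := by
  intro v hv; exact absurd (Finset.mem_univ v) hv

open Classical in
lemma coeff_domPoly [Fintype V] (G : SimpleGraph V) (k : ℕ) :
    (domPoly G).coeff k =
      ((Finset.univ.filter fun S : Finset V => Dominates G S ∧ S.card = k).card : ℤ) := by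
  classical
  rw [domPoly, Polynomial.finset_sum_coeff]
  rw [Finset.card_filter]
  push_cast
  refine Finset.sum_congr rfl fun S _ => ?_
  by_cases h1 : Dominates G S
  · rw [if_pos h1, Polynomial.coeff_X_pow]
    by_cases h2 : S.card = k
    · rw [if_pos h2.symm, if_pos ⟨h1, h2⟩]
    · rw [if_neg (fun h => h2 h.symm), if_neg (fun h => h2 h.2)]
  · rw [if_neg h1, if_neg (fun h => h1 h.1), Polynomial.coeff_zero]

end Basic

-- RHS coefficients
lemma coeff_add_two_pow (n i : ℕ) :
    ((X + 2 : Polynomial ℤ) ^ n).coeff i = (n.choose i : ℤ) * 2 ^ (n - i) := by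
  rw [add_pow]
  rw [Polynomial.finset_sum_coeff]
  have : ∀ k ∈ Finset.range (n+1),
      ((X:Polynomial ℤ) ^ k * 2 ^ (n - k) * (n.choose k : Polynomial ℤ)).coeff i
        = if k = i then (n.choose i : ℤ) * 2 ^ (n - i) else 0 := by
    intro k hk
    have h2 : ((2:Polynomial ℤ) ^ (n-k) * (n.choose k : Polynomial ℤ)) = C ((2:ℤ)^(n-k) * (n.choose k : ℤ)) := by
      rw [map_mul, map_pow]
      norm_num
    rw [mul_assoc, h2, mul_comm, Polynomial.coeff_C_mul, Polynomial.coeff_X_pow]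
    split_ifs with h h'
    · subst h; ring
    · omega
    · omega
    · ring
  rw [Finset.sum_congr rfl this, Finset.sum_ite_eq' (Finset.range (n+1)) i]
  split_ifs with h
  · rfl
  · rw [Finset.mem_range, not_lt] at h
    have : n.choose i = 0 := Nat.choose_eq_zero_of_lt (by omega)
    simp [this]

lemma coeff_rhs (n k : ℕ) :
    ((X ^ n * (X + 2) ^ n : Polynomial ℤ)).coeff k =
      if n ≤ k then (n.choose (k - n) : ℤ) * 2 ^ (2*n - k) else 0 := by
  rw [mul_comm, Polynomial.coeff_mul_X_pow']
  split_ifs with h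
  · rw [coeff_add_two_pow]
    congr 2
    omega
  · rfl

open Finset in
open Classical in
lemma filter_card_eq_choose [Fintype V] (m : ℕ) :
    ((Finset.univ : Finset (Finset V)).filter fun S => S.card = m).card
      = (Fintype.card V).choose m := by
  classical
  rw [← Finset.powerset_univ, ← Finset.powersetCard_eq_filter, Finset.card_powersetCard,
    Finset.card_univ]

section Counts
variable [Fintype V] {G : SimpleGraph V} {n : ℕ}

open Classical in
noncomputable def dcount (G : SimpleGraph V) [Fintype V] (k : ℕ) : ℕ :=
  ((Finset.univ : Finset (Finset V)).filter fun S => Dominates G S ∧ S.card = k).card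

lemma coeff_domPoly' (k : ℕ) : (domPoly G).coeff k = (dcount G k : ℤ) := by
  classical
  rw [coeff_domPoly, dcount]

variable (hG : domPoly G = X ^ n * (X + 2) ^ n)
include hG

lemma dcount_spec (k : ℕ) :
    (dcount G k : ℤ) = if n ≤ k then (n.choose (k - n) : ℤ) * 2 ^ (2*n - k) else 0 := by
  rw [← coeff_domPoly', hG, coeff_rhs]

lemma card_V_eq : Fintype.card V = 2 * n := by
  classical
  have h1 : dcount G (Fintype.card V) = 1 := by
    rw [dcount]
    rw [show ((Finset.univ : Finset (Finset V)).filter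
        fun S => Dominates G S ∧ S.card = Fintype.card V) = {Finset.univ} from ?_]
    · simp
    · ext S
      simp only [Finset.mem_filter, Finset.mem_univ, true_and, Finset.mem_singleton]
      constructor
      · rintro ⟨-, hc⟩
        exact Finset.eq_univ_of_card _ (by rw [hc])
      · rintro rfl
        exact ⟨dominates_univ, Finset.card_univ⟩
  -- 2n ≤ card V
  have h2 : dcount G (2*n) ≠ 0 := by
    have := dcount_spec hG (2*n)
    rw [if_pos (by omega)] at this
    have hc : n.choose (2*n - n) = 1 := by
      rw [show 2*n - n = n by omega, Nat.choose_self]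
    intro h0
    rw [h0, hc] at this
    simp at this
  have h3 : ∃ S : Finset V, Dominates G S ∧ S.card = 2*n := by
    rw [dcount] at h2
    have := Finset.card_ne_zero.mp h2
    obtain ⟨S, hS⟩ := this
    rw [Finset.mem_filter] at hS
    exact ⟨S, hS.2⟩
  obtain ⟨S, -, hScard⟩ := h3
  have hle : 2*n ≤ Fintype.card V := by
    rw [← hScard]; exact Finset.card_le_univ S
  -- card V ≤ 2n
  have h4 := dcount_spec hG (Fintype.card V)
  rw [h1] at h4
  by_contra hne
  have hgt : 2*n < Fintype.card V := by omega
  rw [if_pos (by omega)] at h4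
  have : n.choose (Fintype.card V - n) = 0 := Nat.choose_eq_zero_of_lt (by omega)
  rw [this] at h4
  simp at h4

lemma dcount_low {k : ℕ} (hk : k < n) : dcount G k = 0 := by
  have := dcount_spec hG k
  rw [if_neg (by omega)] at this
  exact_mod_cast this

lemma dcount_eq {i : ℕ} (hi : i ≤ n) : dcount G (n + i) = n.choose i * 2 ^ (n - i) := by
  have := dcount_spec hG (n + i)
  rw [if_pos (by omega), show n + i - n = i by omega, show 2*n - (n+i) = n - i by omega] at this
  exact_mod_cast this

lemma no_isolated (v : V) : ∃ u, G.Adj u v := by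
  classical
  have hcard := card_V_eq hG
  have hn : 1 ≤ n := by
    by_contra h
    have : Fintype.card V = 0 := by omega
    exact absurd (Fintype.card_pos_iff.mpr ⟨v⟩) (by omega)
  have hd : dcount G (2*n - 1) = 2*n := by
    have := dcount_eq hG (i := n - 1) (by omega)
    rw [show n + (n-1) = 2*n - 1 by omega] at this
    rw [this]
    have h1 : n.choose (n-1) = n := by
      rw [← Nat.choose_symm (by omega : n - 1 ≤ n), show n - (n-1) = 1 by omega,
        Nat.choose_one_right]
    rw [h1, show n - (n-1) = 1 by omega]
    ring
  -- all sets of size 2n-1 dominate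
  have hall : ((Finset.univ : Finset (Finset V)).filter fun S => Dominates G S ∧ S.card = 2*n-1)
      = ((Finset.univ : Finset (Finset V)).filter fun S => S.card = 2*n-1) := by
    apply Finset.eq_of_subset_of_card_le
    · exact Finset.monotone_filter_right _ (fun S _ h => h.2)
    · have hch : (2*n).choose (2*n-1) = 2*n := by
        rw [← Nat.choose_symm (by omega : 2*n-1 ≤ 2*n), show 2*n - (2*n-1) = 1 by omega,
          Nat.choose_one_right]
      rw [filter_card_eq_choose, hcard, hch]
      unfold dcount at hd
      exact le_of_eq hd.symm
  have hmem : (Finset.univ.erase v) ∈ ((Finset.univ : Finset (Finset V)).filter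
      fun S => Dominates G S ∧ S.card = 2*n-1) := by
    rw [hall, Finset.mem_filter]
    refine ⟨Finset.mem_univ _, ?_⟩
    rw [Finset.card_erase_of_mem (Finset.mem_univ v), Finset.card_univ, hcard]
  rw [Finset.mem_filter] at hmem
  obtain ⟨u, hu, hadj⟩ := hmem.2.1 v (Finset.notMem_erase v _)
  exact ⟨u, hadj⟩

end Counts

lemma two_mul_choose_two (n : ℕ) : (2*n).choose 2 = 4 * n.choose 2 + n := by
  induction n with
  | zero => simp
  | succ m ih =>
    have h1 : 2*(m+1) = (2*m+1)+1 := by ring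
    rw [h1, Nat.choose_succ_succ' (2*m+1) 1, Nat.choose_succ_succ' (2*m) 1,
      Nat.choose_succ_succ' m 1]
    simp only [Nat.choose_one_right, show (1:ℕ)+1 = 2 from rfl]
    omega

section Pairs
variable [Fintype V] {G : SimpleGraph V} {n : ℕ}

open Classical in
noncomputable def pairs (G : SimpleGraph V) [Fintype V] : Finset (Finset V) :=
  (Finset.univ : Finset (Finset V)).filter fun e => e.card = 2 ∧ ¬ Dominates G (eᶜ)

variable (hG : domPoly G = X ^ n * (X + 2) ^ n)
include hG

open Classical in
lemma pair_char {e : Finset V} (he : e ∈ pairs G) :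
    ∃ w b : V, w ≠ b ∧ e = {w, b} ∧ (∀ u, G.Adj u w ↔ u = b) := by
  rw [pairs, Finset.mem_filter] at he
  obtain ⟨-, hcard2, hnd⟩ := he
  rw [Dominates] at hnd
  push_neg at hnd
  obtain ⟨w, hw, hnb⟩ := hnd
  rw [Finset.mem_compl, not_not] at hw
  have hnbr : ∀ u, G.Adj u w → u ∈ e := by
    intro u hu
    by_contra hne
    exact hnb u (Finset.mem_compl.mpr hne) hu
  obtain ⟨b, hb⟩ := no_isolated hG w
  have hbe : b ∈ e := hnbr b hb
  have hbw : b ≠ w := G.ne_of_adj hb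
  have hsub : ({w, b} : Finset V) ⊆ e := by
    intro x hx
    rcases Finset.mem_insert.mp hx with rfl | hx
    · exact hw
    · rw [Finset.mem_singleton] at hx
      subst hx
      exact hbe
  have hewb : e = {w, b} := by
    refine (Finset.eq_of_subset_of_card_le hsub ?_).symm
    rw [hcard2, Finset.card_pair (Ne.symm hbw)]
  refine ⟨w, b, ?_, hewb, ?_⟩
  · intro h
    exact hbw h.symm
  · intro u
    constructor
    · intro hu
      have hue : u ∈ e := hnbr u hu
      have hunw : u ≠ w := fun h => G.irrefl (h ▸ hu)
      rw [hewb, Finset.mem_insert, Finset.mem_singleton] at hue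
      tauto
    · rintro rfl
      exact hb

open Classical in
lemma card_pairs : (pairs G).card = n := by
  classical
  have hcard := card_V_eq hG
  rcases Nat.eq_zero_or_pos n with rfl | hn
  · have hempty : pairs G = ∅ := by
      rw [pairs, Finset.filter_eq_empty_iff]
      rintro e - ⟨h2, -⟩
      have h3 : e.card ≤ Finset.univ.card := Finset.card_le_univ e
      rw [Finset.card_univ] at h3
      omega
    rw [hempty]
    rfl
  · set A := (Finset.univ : Finset (Finset V)).filter (fun e => e.card = 2) with hA
    have hsplit := Finset.card_filter_add_card_filter_not
      (s := A) (p := fun e => Dominates G (eᶜ))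
    have hAcard : A.card = 4 * n.choose 2 + n := by
      rw [hA, filter_card_eq_choose, hcard, two_mul_choose_two]
    have hpairsA : pairs G = A.filter fun e => ¬ Dominates G (eᶜ) := by
      rw [hA, Finset.filter_filter, pairs]
    have hbij : (A.filter fun e => Dominates G (eᶜ)).card = dcount G (2*n-2) := by
      rw [dcount]
      refine Finset.card_bij' (fun e _ => eᶜ) (fun S _ => Sᶜ) ?_ ?_ ?_ ?_
      · intro e he
        rw [hA, Finset.filter_filter, Finset.mem_filter] at he
        rw [Finset.mem_filter]
        refine ⟨Finset.mem_univ _, he.2.2, ?_⟩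
        rw [Finset.card_compl, hcard, he.2.1]
      · intro S hS
        rw [Finset.mem_filter] at hS
        rw [hA, Finset.filter_filter, Finset.mem_filter]
        refine ⟨Finset.mem_univ _, ?_, ?_⟩
        · rw [Finset.card_compl, hcard, hS.2.2]
          omega
        · rw [compl_compl]
          exact hS.2.1
      · intro e _
        exact compl_compl e
      · intro S _
        exact compl_compl S
    have hdval : dcount G (2*n-2) = 4 * n.choose 2 := by
      rcases Nat.lt_or_ge n 2 with h2 | h2
      · have hn1 : n = 1 := by omega
        subst hn1
        rw [show 2*1-2 = 0 by norm_num, dcount_low hG (by norm_num)]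
        rfl
      · have := dcount_eq hG (i := n - 2) (by omega)
        rw [show n + (n-2) = 2*n-2 by omega, show n - (n-2) = 2 by omega] at this
        rw [this, Nat.choose_symm h2]
        ring
    have hpc : (pairs G).card = (A.filter fun e => ¬ Dominates G (eᶜ)).card := by
      rw [hpairsA]
    omega

end Pairs

/-- Ore's lemma: a graph without isolated vertices has a dominating set
of size at most half the number of vertices. -/
lemma ore {α : Type*} [Fintype α] (G : SimpleGraph α) (hni : ∀ v, ∃ u, G.Adj u v) :
    ∃ S : Finset α, Dominates G S ∧ 2 * S.card ≤ Fintype.card α := by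
  classical
  set I := (Finset.univ : Finset (Finset α)).filter
    (fun S => ∀ a ∈ S, ∀ b ∈ S, ¬ G.Adj a b) with hI
  have hne : I.Nonempty := ⟨∅, by simp [hI]⟩
  obtain ⟨S, hSI, hmax⟩ := I.exists_maximal hne
  rw [hI, Finset.mem_filter] at hSI
  have hind := hSI.2
  have hdomS : Dominates G S := by
    intro v hv
    by_contra hno
    push_neg at hno
    have hins : insert v S ∈ I := by
      rw [hI, Finset.mem_filter]
      refine ⟨Finset.mem_univ _, ?_⟩
      intro a ha b hb
      rcases Finset.mem_insert.mp ha with rfl | ha' <;>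
        rcases Finset.mem_insert.mp hb with rfl | hb'
      · exact fun h => G.irrefl h
      · exact fun h => hno b hb' (G.adj_symm h)
      · exact fun h => hno a ha' h
      · exact hind a ha' b hb'
    exact (Finset.ssubset_insert hv).2 (hmax hins (Finset.ssubset_insert hv).1)
  have hdomC : Dominates G (Sᶜ) := by
    intro v hv
    rw [Finset.mem_compl, not_not] at hv
    obtain ⟨u, hu⟩ := hni v
    have huS : u ∉ S := fun huS => hind u huS v hv hu
    exact ⟨u, Finset.mem_compl.mpr huS, hu⟩
  have hsum := Finset.card_add_card_compl S
  rcases le_or_gt S.card (Sᶜ).card with h | h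
  · exact ⟨S, hdomS, by omega⟩
  · exact ⟨Sᶜ, hdomC, by omega⟩

section TwoPendants
variable [Fintype V] {G : SimpleGraph V} {n : ℕ}
variable (hG : domPoly G = X ^ n * (X + 2) ^ n)
include hG

lemma not_two_pendants {v w w' : V} (hww' : w ≠ w')
    (hw : ∀ u, G.Adj u w ↔ u = v) (hw' : ∀ u, G.Adj u w' ↔ u = v) : False := by
  classical
  have hcard := card_V_eq hG
  set A : Finset V := insert v (Finset.univ.filter (fun u => ∀ z, G.Adj z u ↔ z = v)) with hA
  have hwA : w ∈ A := by
    rw [hA, Finset.mem_insert]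
    right
    rw [Finset.mem_filter]
    exact ⟨Finset.mem_univ _, hw⟩
  have hw'A : w' ∈ A := by
    rw [hA, Finset.mem_insert]
    right
    rw [Finset.mem_filter]
    exact ⟨Finset.mem_univ _, hw'⟩
  have hvA : v ∈ A := Finset.mem_insert_self _ _
  have hadjvw : G.Adj v w := (hw v).mpr rfl
  have hadjvw' : G.Adj v w' := (hw' v).mpr rfl
  have hvw : v ≠ w := G.ne_of_adj hadjvw
  have hvw' : v ≠ w' := G.ne_of_adj hadjvw'
  have hAcard : 3 ≤ A.card := by
    have hsub : ({v, w, w'} : Finset V) ⊆ A := by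
      intro x hx
      simp only [Finset.mem_insert, Finset.mem_singleton] at hx
      rcases hx with rfl | rfl | rfl
      · exact hvA
      · exact hwA
      · exact hw'A
    have h3 : ({v, w, w'} : Finset V).card = 3 := by
      rw [Finset.card_insert_of_notMem (by simp [hvw, hvw']),
        Finset.card_pair hww']
    rw [← h3]
    exact Finset.card_le_card hsub
  -- every vertex outside A is adjacent only to vertices... has a neighbor outside A
  have hnbrA : ∀ z : V, z ∉ A → ∃ u, u ∉ A ∧ G.Adj u z := by
    intro z hz
    by_contra hcon
    push_neg at hcon
    -- all neighbors of z are in A; pendant neighbors impossible, so all = v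
    have hallv : ∀ y, G.Adj y z → y = v := by
      intro y hy
      have hyA : y ∈ A := by
        by_contra hyA
        exact hcon y hyA hy
      rw [hA, Finset.mem_insert] at hyA
      rcases hyA with rfl | hyp
      · rfl
      · rw [Finset.mem_filter] at hyp
        -- y is a pendant attached to v; z is adjacent to y so z = v
        have : z = v := (hyp.2 z).mp (G.adj_symm hy)
        exfalso
        apply hz
        rw [this]
        exact hvA
    obtain ⟨y0, hy0⟩ := no_isolated hG z
    have hy0v : y0 = v := hallv y0 hy0
    have : z ∈ A := by
      rw [hA, Finset.mem_insert]
      right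
      rw [Finset.mem_filter]
      refine ⟨Finset.mem_univ _, fun y => ⟨hallv y, ?_⟩⟩
      rintro rfl
      rw [← hy0v]
      exact hy0
    exact hz this
  -- induced graph on the complement of A
  set B : Finset V := Aᶜ with hB
  have hniB : ∀ z : ↥(B : Set V), ∃ u : ↥(B : Set V), (G.induce (B : Set V)).Adj u z := by
    rintro ⟨z, hz⟩
    have hz' : z ∉ A := by
      have := hz
      simp only [Finset.coe_mem, Finset.mem_coe, hB, Finset.mem_compl] at this ⊢
      exact this
    obtain ⟨u, huA, hadj⟩ := hnbrA z hz'
    refine ⟨⟨u, ?_⟩, hadj⟩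
    simp only [Finset.mem_coe, hB, Finset.mem_compl]
    exact huA
  obtain ⟨D'', hD''dom, hD''card⟩ := ore (G.induce (B : Set V)) hniB
  have hBcard : Fintype.card ↥(B : Set V) = B.card := by simp
  set D : Finset V := insert v (Finset.image Subtype.val D'') with hD
  have hDdom : Dominates G D := by
    intro z hz
    by_cases hzA : z ∈ A
    · rw [hA, Finset.mem_insert] at hzA
      rcases hzA with rfl | hzp
      · exfalso
        exact hz (Finset.mem_insert_self _ _)
      · rw [Finset.mem_filter] at hzp
        refine ⟨v, Finset.mem_insert_self _ _, ?_⟩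
        have : G.Adj v z := (hzp.2 v).mpr rfl
        exact this
    · have hzB : z ∈ B := by rw [hB, Finset.mem_compl]; exact hzA
      have hzD'' : (⟨z, by simp [hzB]⟩ : ↥(B : Set V)) ∉ D'' := by
        intro hmem
        apply hz
        rw [hD, Finset.mem_insert]
        right
        exact Finset.mem_image.mpr ⟨_, hmem, rfl⟩
      obtain ⟨u, huD'', huadj⟩ := hD''dom _ hzD''
      refine ⟨(u : V), ?_, huadj⟩
      rw [hD, Finset.mem_insert]
      right
      exact Finset.mem_image.mpr ⟨u, huD'', rfl⟩
  have hn2 : 2 ≤ n := by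
    have : 3 ≤ Fintype.card V := by
      calc 3 ≤ A.card := hAcard
      _ ≤ Finset.univ.card := Finset.card_le_univ A
      _ = Fintype.card V := Finset.card_univ
    omega
  have hDcard : D.card ≤ n - 1 := by
    have h1 : D.card ≤ D''.card + 1 := by
      calc D.card ≤ (Finset.image Subtype.val D'').card + 1 := Finset.card_insert_le _ _
      _ ≤ D''.card + 1 := Nat.add_le_add_right Finset.card_image_le 1
    have h2 : B.card + A.card = 2*n := by
      rw [hB]
      have := Finset.card_add_card_compl A
      omega
    rw [hBcard] at hD''card
    omega
  obtain ⟨T, hDT, hTcard⟩ := Finset.exists_superset_card_eq (n := n - 1)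
    hDcard (by omega)
  have hTdom : Dominates G T := hDdom.mono hDT
  have hzero := dcount_low hG (show n - 1 < n by omega)
  rw [dcount, Finset.card_eq_zero] at hzero
  have : T ∈ (Finset.univ : Finset (Finset V)).filter
      (fun S => Dominates G S ∧ S.card = n - 1) := by
    rw [Finset.mem_filter]
    exact ⟨Finset.mem_univ _, hTdom, hTcard⟩
  rw [hzero] at this
  exact absurd this (Finset.notMem_empty T)

end TwoPendants

section Structure
variable [Fintype V] {G : SimpleGraph V} {n : ℕ}
variable (hG : domPoly G = X ^ n * (X + 2) ^ n)
include hG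

lemma pairs_disjoint {e e' : Finset V} (he : e ∈ pairs G) (he' : e' ∈ pairs G)
    (hne : e ≠ e') : Disjoint e e' := by
  classical
  obtain ⟨w, b, hwb, heeq, hpend⟩ := pair_char hG he
  obtain ⟨w', b', hwb', he'eq, hpend'⟩ := pair_char hG he'
  rw [Finset.disjoint_left]
  intro t ht ht'
  rw [heeq, Finset.mem_insert, Finset.mem_singleton] at ht
  rw [he'eq, Finset.mem_insert, Finset.mem_singleton] at ht'
  rcases ht with rfl | rfl <;> rcases ht' with h1 | h1
  · -- t = w = w'
    subst h1
    have hb : b' = b := (hpend b').mp ((hpend' b').mpr rfl)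
    exact hne (by rw [heeq, he'eq, hb])
  · -- t = w = b'
    subst h1
    have : G.Adj t w' := (hpend' t).mpr rfl
    have h2 : w' = b := (hpend w').mp (G.adj_symm this)
    exact hne (by rw [heeq, he'eq, h2, Finset.pair_comm])
  · -- t = b = w'
    subst h1
    have : G.Adj t w := (hpend t).mpr rfl
    have h2 : w = b' := (hpend' w).mp (G.adj_symm this)
    exact hne (by rw [heeq, he'eq, ← h2, Finset.pair_comm])
  · -- t = b = b'
    subst h1
    have hwdiff : w ≠ w' := by
      intro h
      exact hne (by rw [heeq, he'eq, h])
    exact not_two_pendants hG hwdiff hpend hpend'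

lemma exists_corona :
    ∃ H : SimpleGraph (Fin n), Nonempty (G ≃g corona H (⊤ : SimpleGraph (Fin 1))) := by
  classical
  have hpc := card_pairs hG
  have hchoice : ∀ e : ↥(pairs G), ∃ wb : V × V, wb.1 ≠ wb.2 ∧
      (e : Finset V) = {wb.1, wb.2} ∧ (∀ u, G.Adj u wb.1 ↔ u = wb.2) := by
    intro e
    obtain ⟨w, b, h1, h2, h3⟩ := pair_char hG e.2
    exact ⟨(w, b), h1, h2, h3⟩
  choose f hf1 hf2 hf3 using hchoice
  set σ : Fin n ≃ ↥(pairs G) := ((pairs G).equivFin.trans (finCongr hpc)).symm with hσ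
  set a : Fin n → V := fun i => (f (σ i)).2 with ha
  set bb : Fin n → V := fun i => (f (σ i)).1 with hbb
  have hab : ∀ i, bb i ≠ a i := fun i => hf1 (σ i)
  have hpair : ∀ i, ((σ i : Finset V)) = {bb i, a i} := fun i => hf2 (σ i)
  have hpendant : ∀ i u, G.Adj u (bb i) ↔ u = a i := fun i => hf3 (σ i)
  have hmem_b : ∀ i, bb i ∈ (σ i : Finset V) := by
    intro i
    rw [hpair i]
    exact Finset.mem_insert_self _ _
  have hmem_a : ∀ i, a i ∈ (σ i : Finset V) := by
    intro i
    rw [hpair i]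
    exact Finset.mem_insert_of_mem (Finset.mem_singleton_self _)
  have hsep : ∀ i j (x : V), x ∈ (σ i : Finset V) → x ∈ (σ j : Finset V) → i = j := by
    intro i j x hxi hxj
    by_contra hij
    have hσne : σ i ≠ σ j := fun h => hij (σ.injective h)
    have hvne : (σ i : Finset V) ≠ (σ j : Finset V) :=
      fun h => hσne (Subtype.coe_injective h)
    exact absurd hxj
      (Finset.disjoint_left.mp (pairs_disjoint hG (σ i).2 (σ j).2 hvne) hxi)
  have ha_inj : ∀ i j, a i = a j → i = j :=
    fun i j h => hsep i j (a i) (hmem_a i) (h ▸ hmem_a j)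
  have hb_inj : ∀ i j, bb i = bb j → i = j :=
    fun i j h => hsep i j (bb i) (hmem_b i) (h ▸ hmem_b j)
  have hab_ne : ∀ i j, a i ≠ bb j := by
    intro i j h
    have hij : i = j := hsep i j (a i) (hmem_a i) (h ▸ hmem_b j)
    subst hij
    exact hab i h.symm
  set H : SimpleGraph (Fin n) :=
    { Adj := fun i j => G.Adj (a i) (a j),
      symm := ⟨fun i j h => G.adj_symm h⟩,
      loopless := ⟨fun i h => G.irrefl h⟩ } with hH
  set ψ : (Fin n ⊕ Fin n × Fin 1) → V := Sum.elim a (fun p => bb p.1) with hψ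
  have hinj : Function.Injective ψ := by
    rintro (i | ⟨i, u⟩) (j | ⟨j, u'⟩) h
    · simp only [hψ, Sum.elim_inl] at h
      rw [ha_inj i j h]
    · simp only [hψ, Sum.elim_inl, Sum.elim_inr] at h
      exact absurd h (hab_ne i j)
    · simp only [hψ, Sum.elim_inl, Sum.elim_inr] at h
      exact absurd h.symm (hab_ne j i)
    · simp only [hψ, Sum.elim_inr] at h
      rw [hb_inj i j h, Subsingleton.elim u u']
  have hbij : Function.Bijective ψ := by
    rw [Fintype.bijective_iff_injective_and_card]
    refine ⟨hinj, ?_⟩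
    simp only [Fintype.card_sum, Fintype.card_prod, Fintype.card_fin, card_V_eq hG]
    ring
  have hmap : ∀ x y, G.Adj (ψ x) (ψ y) ↔ (corona H (⊤ : SimpleGraph (Fin 1))).Adj x y := by
    rintro (i | ⟨i, u⟩) (j | ⟨j, u'⟩)
    · exact Iff.rfl
    · show G.Adj (a i) (bb j) ↔ i = j
      constructor
      · intro h
        exact ha_inj i j ((hpendant j (a i)).mp h)
      · rintro rfl
        exact (hpendant _ _).mpr rfl
    · show G.Adj (bb i) (a j) ↔ j = i
      constructor
      · intro h
        exact ha_inj j i ((hpendant i (a j)).mp (G.adj_symm h))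
      · rintro rfl
        exact G.adj_symm ((hpendant _ _).mpr rfl)
    · show G.Adj (bb i) (bb j) ↔ i = j ∧ (⊤ : SimpleGraph (Fin 1)).Adj u u'
      constructor
      · intro h
        exact absurd ((hpendant j (bb i)).mp h).symm (hab_ne j i)
      · rintro ⟨rfl, hadj⟩
        exact absurd (Subsingleton.elim u u') hadj.ne
  refine ⟨H, ⟨?_⟩⟩
  exact (SimpleGraph.Iso.symm
    { toEquiv := Equiv.ofBijective ψ hbij,
      map_rel_iff' := fun {x y} => hmap x y })

end Structure

open Classical in
lemma domPoly_congr {W : Type*} [Fintype V] [Fintype W] {G : SimpleGraph V}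
    {G' : SimpleGraph W} (e : G ≃g G') : domPoly G = domPoly G' := by
  classical
  set ε : V ≃ W := e.toEquiv with hε
  have hadj_iff : ∀ x y, G'.Adj (ε x) (ε y) ↔ G.Adj x y := fun x y => e.map_adj_iff
  rw [domPoly, domPoly]
  apply Fintype.sum_equiv ε.finsetCongr
  intro S
  have hcard : (ε.finsetCongr S).card = S.card := by
    rw [Equiv.finsetCongr_apply, Finset.card_map]
  have hdom : Dominates G S ↔ Dominates G' (ε.finsetCongr S) := by
    rw [Equiv.finsetCongr_apply]
    constructor
    · intro h v' hv'
      have hsv : ε.symm v' ∉ S := by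
        intro hmem
        apply hv'
        rw [Finset.mem_map_equiv]
        exact hmem
      obtain ⟨u, hu, hadj⟩ := h _ hsv
      refine ⟨ε u, ?_, ?_⟩
      · rw [Finset.mem_map_equiv, Equiv.symm_apply_apply]
        exact hu
      · have h2 := (hadj_iff u (ε.symm v')).mpr hadj
        rwa [Equiv.apply_symm_apply] at h2
    · intro h v hv
      have hev : ε v ∉ S.map ε.toEmbedding := by
        rw [Finset.mem_map_equiv, Equiv.symm_apply_apply]
        exact hv
      obtain ⟨u', hu', hadj⟩ := h _ hev
      rw [Finset.mem_map_equiv] at hu'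
      refine ⟨ε.symm u', hu', ?_⟩
      apply (hadj_iff (ε.symm u') v).mp
      rwa [Equiv.apply_symm_apply]
  rw [hcard]
  exact if_congr hdom rfl rfl

open Classical in
lemma domPoly_corona (n : ℕ) (H : SimpleGraph (Fin n)) :
    domPoly (corona H (⊤ : SimpleGraph (Fin 1))) = X ^ n * (X + 2) ^ n := by
  classical
  set K := corona H (⊤ : SimpleGraph (Fin 1)) with hK
  have hdomiff : ∀ S : Finset (Fin n ⊕ Fin n × Fin 1),
      Dominates K S ↔ ∀ i : Fin n, Sum.inl i ∈ S ∨ Sum.inr (i, 0) ∈ S := by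
    intro S
    constructor
    · intro h i
      by_cases hr : Sum.inr (i, (0 : Fin 1)) ∈ S
      · right; exact hr
      · obtain ⟨u, hu, hadj⟩ := h _ hr
        rcases u with a | ⟨a, w⟩
        · have ha : a = i := hadj
          subst ha
          left; exact hu
        · exfalso
          have h2 : a = i ∧ (⊤ : SimpleGraph (Fin 1)).Adj w 0 := hadj
          exact h2.2.ne (Subsingleton.elim w 0)
    · intro h v hv
      rcases v with a | ⟨a, w⟩
      · rcases h a with ha | ha
        · exact absurd ha hv
        · exact ⟨Sum.inr (a, 0), ha, show a = a from rfl⟩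
      · obtain rfl : w = 0 := Subsingleton.elim w 0
        rcases h a with ha | ha
        · exact ⟨Sum.inl a, ha, show a = a from rfl⟩
        · exact absurd ha hv
  set Ef : Finset (Fin n ⊕ Fin n × Fin 1) → (Fin n → Finset Bool) := fun S i =>
    (if Sum.inl i ∈ S then ({false} : Finset Bool) else ∅) ∪
    (if Sum.inr (i, (0 : Fin 1)) ∈ S then ({true} : Finset Bool) else ∅) with hEf
  set Eg : (Fin n → Finset Bool) → Finset (Fin n ⊕ Fin n × Fin 1) := fun g =>
    Finset.univ.filter fun v =>
      Sum.elim (fun i => false ∈ g i) (fun p => true ∈ g p.1) v with hEg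
  have hleft : ∀ S, Eg (Ef S) = S := by
    intro S
    ext v
    rcases v with i | ⟨i, w⟩
    · by_cases h1 : Sum.inl i ∈ S <;>
        by_cases h2 : Sum.inr (i, (0 : Fin 1)) ∈ S <;>
        simp [hEg, hEf, h1, h2]
    · obtain rfl : w = 0 := Subsingleton.elim w 0
      by_cases h1 : Sum.inl i ∈ S <;>
        by_cases h2 : Sum.inr (i, (0 : Fin 1)) ∈ S <;>
        simp [hEg, hEf, h1, h2]
  have hright : ∀ g, Ef (Eg g) = g := by
    intro g
    funext i
    ext b
    rcases b with _ | _ <;>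
      by_cases h1 : false ∈ g i <;> by_cases h2 : true ∈ g i <;>
      simp [hEg, hEf, h1, h2]
  set E : Finset (Fin n ⊕ Fin n × Fin 1) ≃ (Fin n → Finset Bool) :=
    ⟨Ef, Eg, hleft, hright⟩ with hE
  have hcardE : ∀ S : Finset (Fin n ⊕ Fin n × Fin 1), S.card = ∑ i, (Ef S i).card := by
    intro S
    rw [Finset.card_eq_sum_card_fiberwise
      (f := Sum.elim id Prod.fst) (t := Finset.univ) (fun v _ => Finset.mem_univ _)]
    refine Finset.sum_congr rfl fun i _ => ?_
    refine Finset.card_bij (fun v _ => Sum.elim (fun _ => false) (fun _ => true) v) ?_ ?_ ?_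
    · rintro (a | ⟨a, w⟩) hv
      · rw [Finset.mem_filter] at hv
        have ha : a = i := hv.2
        subst ha
        simp [hEf, hv.1]
      · rw [Finset.mem_filter] at hv
        have ha : a = i := hv.2
        subst ha
        obtain rfl : w = 0 := Subsingleton.elim w 0
        simp [hEf, hv.1]
    · rintro (a | ⟨a, w⟩) hv (a' | ⟨a', w'⟩) hv' heq
      · rw [Finset.mem_filter] at hv hv'
        have : a = i := hv.2
        have : a' = i := hv'.2
        simp_all
      · simp at heq
      · simp at heq
      · rw [Finset.mem_filter] at hv hv'
        obtain rfl : w = 0 := Subsingleton.elim w 0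
        obtain rfl : w' = 0 := Subsingleton.elim w' 0
        have h1 : a = i := hv.2
        have h2 : a' = i := hv'.2
        subst h1; subst h2
        rfl
    · intro b hb
      have hb' : b ∈ (if Sum.inl i ∈ S then ({false} : Finset Bool) else ∅) ∪
          (if Sum.inr (i, (0 : Fin 1)) ∈ S then ({true} : Finset Bool) else ∅) := hb
      rw [Finset.mem_union] at hb'
      rcases b with _ | _
      · -- b = false
        have hmem : Sum.inl i ∈ S := by
          rcases hb' with h | h
          · by_contra hc
            rw [if_neg hc] at h
            exact absurd h (Finset.notMem_empty _)
          · exfalso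
            split_ifs at h
            · exact absurd (Finset.mem_singleton.mp h) (by simp)
            · exact absurd h (Finset.notMem_empty _)
        exact ⟨Sum.inl i, Finset.mem_filter.mpr ⟨hmem, rfl⟩, rfl⟩
      · -- b = true
        have hmem : Sum.inr (i, (0 : Fin 1)) ∈ S := by
          rcases hb' with h | h
          · exfalso
            split_ifs at h
            · exact absurd (Finset.mem_singleton.mp h) (by simp)
            · exact absurd h (Finset.notMem_empty _)
          · by_contra hc
            rw [if_neg hc] at h
            exact absurd h (Finset.notMem_empty _)
        exact ⟨Sum.inr (i, 0), Finset.mem_filter.mpr ⟨hmem, rfl⟩, rfl⟩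
  have hnonE : ∀ S : Finset (Fin n ⊕ Fin n × Fin 1),
      Dominates K S ↔ ∀ i, (Ef S i).Nonempty := by
    intro S
    rw [hdomiff S]
    apply forall_congr'
    intro i
    by_cases h1 : Sum.inl i ∈ S <;> by_cases h2 : Sum.inr (i, (0:Fin 1)) ∈ S <;>
      simp [hEf, h1, h2, Finset.Nonempty]
  -- transport the sum
  rw [domPoly]
  rw [Fintype.sum_equiv E
    (fun S => if Dominates K S then (X : Polynomial ℤ) ^ S.card else 0)
    (fun g => if (∀ i, (g i).Nonempty) then (X : Polynomial ℤ) ^ (∑ i, (g i).card) else 0)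
    (fun S => by
      show (if Dominates K S then (X : Polynomial ℤ) ^ S.card else 0)
          = (if (∀ i, (Ef S i).Nonempty)
              then (X : Polynomial ℤ) ^ (∑ i, (Ef S i).card) else 0)
      rw [hcardE S]
      exact if_congr (hnonE S) rfl rfl)]
  -- now evaluate the sum over functions
  have hfilter : (Finset.univ.filter fun g : Fin n → Finset Bool => ∀ i, (g i).Nonempty)
      = Fintype.piFinset (fun _ => Finset.univ.filter Finset.Nonempty) := by
    ext g
    simp [Fintype.mem_piFinset]
  rw [← Finset.sum_filter, hfilter]
  have hterm : ∀ g : Fin n → Finset Bool,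
      (X : Polynomial ℤ) ^ (∑ i, (g i).card) = ∏ i, (X : Polynomial ℤ) ^ (g i).card := by
    intro g
    rw [Finset.prod_pow_eq_pow_sum]
  rw [Finset.sum_congr rfl (fun g _ => hterm g)]
  have hps := Finset.prod_univ_sum (κ := fun _ : Fin n => Finset Bool)
      (fun _ => (Finset.univ.filter Finset.Nonempty : Finset (Finset Bool)))
      (fun _ B => (X : Polynomial ℤ) ^ B.card)
  rw [← hps]
  have hsingle : (∑ B ∈ (Finset.univ.filter Finset.Nonempty : Finset (Finset Bool)),
      (X : Polynomial ℤ) ^ B.card) = X ^ 2 + 2 * X := by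
    have : (Finset.univ.filter Finset.Nonempty : Finset (Finset Bool))
        = {{false}, {true}, {false, true}} := by decide
    rw [this]
    rw [Finset.sum_insert (by decide), Finset.sum_insert (by decide),
      Finset.sum_singleton]
    have c1 : ({false} : Finset Bool).card = 1 := rfl
    have c2 : ({true} : Finset Bool).card = 1 := rfl
    have c3 : ({false, true} : Finset Bool).card = 2 := rfl
    rw [c1, c2, c3]
    ring
  rw [Finset.prod_congr rfl (fun i _ => hsingle), Finset.prod_const, Finset.card_univ,
    Fintype.card_fin, ← mul_pow]
  congr 1
  ring

/-- `D(G,x) = xⁿ(x+2)ⁿ` iff `G ≅ H ∘ K₁` for some graph `H` of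
order `n`. -/
theorem domPoly_eq_iff_corona_K1 (n : ℕ) {V : Type*} [Fintype V] (G : SimpleGraph V) :
    domPoly G = X ^ n * (X + 2) ^ n ↔
      ∃ H : SimpleGraph (Fin n),
        Nonempty (G ≃g corona H (⊤ : SimpleGraph (Fin 1))) := by
  constructor
  · intro hG
    exact exists_corona hG
  · rintro ⟨H, ⟨iso⟩⟩
    rw [domPoly_congr iso, domPoly_corona]
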